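/- Let n be a positive integer, p a prime, and A an n×n integer matrix. Then there exist unimodular matrices P, Q ∈ GL_n(ℤ) such that PAQ is p-correspondent, i.e., for PAQ of rank r with invariant factors s_1,…,s_r and nonzero eigenvalues λ_1,…,λ_r (in a finite extension of ℚ_p) ordered by increasing p-adic valuation, v_p(s_i) = v_p(λ_i) for all i ∈ {1,…,r}. -/

import Mathlib

open Matrix Polynomial

/-- The `k`-th determinantal divisor of an integer matrix: the GCD of all
`k × k` minors (non-injective row/column selections contribute `0` and do not
change the GCD). -/
noncomputable def detDiv {n : ℕ} (A : Matrix (Fin n) (Fin n) ℤ) (k : ℕ) : ℤ :=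
  Finset.univ.gcd (fun στ : (Fin k → Fin n) × (Fin k → Fin n) =>
    (A.submatrix στ.1 στ.2).det)

/-- `A` is `p`-characterized: for each `i ∈ [1, r]` (where `r = rank A`), the
`p`-adic valuation of the coefficient `f_i` of `x^(n-i)` in the characteristic
polynomial of `A` equals the `p`-adic valuation of the `i`-th determinantal
divisor `Δ_i` of `A`.  Equality of valuations is expressed via divisibility by
all powers of `p`. -/
def PCharacterized {n : ℕ} (p : ℕ) (A : Matrix (Fin n) (Fin n) ℤ) : Prop :=
  ∀ i : ℕ, 1 ≤ i → i ≤ A.rank →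
    ∀ k : ℕ, ((p : ℤ) ^ k ∣ A.charpoly.coeff (n - i) ↔ (p : ℤ) ^ k ∣ detDiv A i)

/-- `s : Fin n → ℤ` is (the diagonal of) a Smith normal form of `A`:
`A = P ⬝ diagonal s ⬝ Q` for unimodular `P, Q`, with the divisibility chain
`s i ∣ s j` for `i ≤ j`. -/
def IsSmithDiag {n : ℕ} (A : Matrix (Fin n) (Fin n) ℤ) (s : Fin n → ℤ) : Prop :=
  (∃ P Q : Matrix (Fin n) (Fin n) ℤ, IsUnit P.det ∧ IsUnit Q.det ∧
      A = P * Matrix.diagonal s * Q) ∧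
    ∀ i j : Fin n, i ≤ j → s i ∣ s j

/-- The `p`-adic valuation of an element `a` of a finite extension of `ℚ_p`,
defined via its minimal polynomial `x^d + ⋯ + a₀` over `ℚ_p` as `v_p(a₀)/d`. -/
noncomputable def padicEigVal (p : ℕ) [Fact p.Prime] {K : Type*} [Field K]
    [Algebra ℚ_[p] K] (a : K) : ℚ :=
  (((minpoly ℚ_[p] a).coeff 0).valuation : ℚ) / ((minpoly ℚ_[p] a).natDegree : ℚ)

open scoped Classical in
/-- `A` is `p`-correspondent: for any Smith normal form `diag s` of `A` and any
finite extension `K` of `ℚ_p` containing all eigenvalues of `A` (i.e. in which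
the characteristic polynomial splits, having `n` roots counted with
multiplicity), the multiset of `p`-adic valuations of the nonzero eigenvalues
of `A` equals the multiset of `p`-adic valuations of the nonzero invariant
factors of `A`.  (Equality of multisets is the same as equality of the sorted
lists `v_p(λ_1) ≤ ⋯ ≤ v_p(λ_r)` and `v_p(s_1), …, v_p(s_r)`.) -/
def PCorrespondent {n : ℕ} (p : ℕ) [Fact p.Prime] (A : Matrix (Fin n) (Fin n) ℤ) : Prop :=
  ∀ s : Fin n → ℤ, IsSmithDiag A s →
    ∀ (K : Type) (_ : Field K) (_ : Algebra ℚ_[p] K) (_ : FiniteDimensional ℚ_[p] K),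
      (A.charpoly.map (Int.castRingHom K)).roots.card = n →
      (((A.charpoly.map (Int.castRingHom K)).roots.filter (· ≠ 0)).map (padicEigVal p))
        = ((Finset.univ.val.map s).filter (· ≠ 0)).map
            (fun x => (padicValInt p x : ℚ))

set_option maxHeartbeats 1000000


theorem exists_eq_mul_diagonal_mul (n : ℕ) (A : Matrix (Fin n) (Fin n) ℤ) :
    ∃ (P Q : Matrix (Fin n) (Fin n) ℤ) (d : Fin n → ℤ), IsUnit P.det ∧ IsUnit Q.det ∧
      A = P * Matrix.diagonal d * Q := by
  classical
  let e : Module.Basis (Fin n) ℤ (Fin n → ℤ) := Pi.basisFun ℤ (Fin n)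
  let φ : (Fin n → ℤ) →ₗ[ℤ] (Fin n → ℤ) := Matrix.toLin e e A
  let N := LinearMap.range φ
  obtain ⟨m, ⟨bM, bN, f, a, hsnf⟩⟩ := Submodule.smithNormalForm e N
  haveI : Module.Free ℤ N := Module.Free.of_basis bN
  let ψ : (Fin n → ℤ) →ₗ[ℤ] N := φ.rangeRestrict
  have hψsurj : Function.Surjective ψ := φ.surjective_rangeRestrict
  obtain ⟨σ, hσ⟩ := Module.projective_lifting_property ψ LinearMap.id hψsurj
  have hσ' : ∀ y : N, ψ (σ y) = y := fun y => congrArg (fun g => g y) hσ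
  have hσinj : Function.Injective σ := by
    intro y y' h
    have := hσ' y; rw [h, hσ' y'] at this; exact this.symm
  let R := LinearMap.range σ
  let fproj : (Fin n → ℤ) →ₗ[ℤ] R :=
    (σ.comp ψ).codRestrict R (fun x => ⟨ψ x, rfl⟩)
  have hproj : ∀ x : R, fproj x = x := by
    rintro ⟨_, y, rfl⟩
    ext
    show σ (ψ (σ y)) _ = σ y _; rw [hσ' y]
  have hcompl : IsCompl R (LinearMap.ker fproj) := LinearMap.isCompl_of_proj hproj
  obtain ⟨k, bK⟩ := Submodule.basisOfPid e (LinearMap.ker fproj)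
  let bR : Module.Basis (Fin m) ℤ R := bN.map (LinearEquiv.ofInjective σ hσinj)
  let c : Module.Basis (Fin m ⊕ Fin k) ℤ (Fin n → ℤ) :=
    (bR.prod bK).map (Submodule.prodEquivOfIsCompl R (LinearMap.ker fproj) hcompl)
  have hφ_eq : ∀ x, φ x = ((ψ x : N) : Fin n → ℤ) := fun x => rfl
  have hcinl : ∀ i, φ (c (Sum.inl i)) = a i • bM (f i) := by
    intro i
    have h1 : c (Sum.inl i) = σ (bN i) := by
      simp only [c, Module.Basis.map_apply, Module.Basis.prod_apply, Submodule.coe_prodEquivOfIsCompl',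
        Sum.elim_inl, Function.comp_apply, LinearMap.coe_inl, bR, Module.Basis.map_apply]
      simpa using LinearEquiv.ofInjective_apply σ (bN i)
    rw [h1, hφ_eq, hσ' (bN i), hsnf i]
  have hcinr : ∀ j, φ (c (Sum.inr j)) = 0 := by
    intro j
    have h1 : c (Sum.inr j) = (bK j : Fin n → ℤ) := by
      simp [c, Module.Basis.prod_apply, Submodule.coe_prodEquivOfIsCompl']
    have h2 : ψ ((bK j : Fin n → ℤ)) = 0 := by
      have h3 : fproj ((bK j : Fin n → ℤ)) = 0 := (bK j).2
      have h4 : σ (ψ ((bK j : Fin n → ℤ))) = 0 := by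
        have h5 : ((fproj ((bK j : Fin n → ℤ))) : Fin n → ℤ)
            = σ (ψ ((bK j : Fin n → ℤ))) := rfl
        rw [h3] at h5
        simpa using h5.symm
      exact hσinj (a₁ := ψ ((bK j : Fin n → ℤ))) (a₂ := 0) (by simpa using h4)
    rw [h1, hφ_eq, h2]
    simp
  let D := LinearMap.toMatrix c bM φ
  have hDinl : ∀ jj i, D jj (Sum.inl i) = if f i = jj then a i else 0 := by
    intro jj i
    show (LinearMap.toMatrix c bM) φ jj (Sum.inl i) = _
    rw [LinearMap.toMatrix_apply, hcinl i, _root_.map_smul, Module.Basis.repr_self]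
    simp [Finsupp.single_apply, Finsupp.smul_apply]
  have hDinr : ∀ jj j, D jj (Sum.inr j) = 0 := by
    intro jj j
    show (LinearMap.toMatrix c bM) φ jj (Sum.inr j) = _
    rw [LinearMap.toMatrix_apply, hcinr j]
    simp
  -- index equivalence
  have hcardsum : m + k = n := by
    have := Fintype.card_congr (Module.Basis.indexEquiv c e)
    simpa using this
  have hcardT : Fintype.card (Set.range ⇑f) = m := by
    rw [Set.card_range_of_injective f.injective]; simp
  have hcardTc : Fintype.card ↥(Set.range ⇑f)ᶜ = k := by
    rw [Fintype.card_compl_set, hcardT]; simp; omega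
  let g : Fin k ≃ ↥(Set.range ⇑f)ᶜ := Fintype.equivOfCardEq (by simp [hcardTc])
  let ε : (Fin m ⊕ Fin k) ≃ Fin n :=
    ((Equiv.ofInjective ⇑f f.injective).sumCongr g).trans (Equiv.Set.sumCompl (Set.range ⇑f))
  have hε : ∀ i, ε (Sum.inl i) = f i := by intro i; simp [ε]
  let d : Fin n → ℤ := fun j => D j (ε.symm j)
  have hdiag : D.submatrix id ε.symm = Matrix.diagonal d := by
    ext j j'
    by_cases h : j = j'
    · subst h; simp [Matrix.diagonal, d]
    · rw [Matrix.diagonal_apply_ne _ h]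
      rcases h' : ε.symm j' with i | jj
      · have hfi : f i = j' := by rw [← hε i, ← h']; simp
        simp only [Matrix.submatrix_apply, h', id, hDinl]
        rw [if_neg (by rw [hfi]; exact fun hh => h hh.symm)]
      · simp [h', hDinr]
  -- matrix equality
  let P := LinearMap.toMatrix bM e (LinearMap.id)
  let Q := LinearMap.toMatrix e c (LinearMap.id)
  have hA : A = P * (D * Q) := by
    have h1 : LinearMap.toMatrix e e φ = A := LinearMap.toMatrix_toLin e e A
    have h2 : φ = LinearMap.id.comp (φ.comp LinearMap.id) := by ext x; simp
    rw [← h1, h2, LinearMap.toMatrix_comp e bM e, LinearMap.toMatrix_comp e c bM]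
  have hDQ : D * Q = Matrix.diagonal d * Q.submatrix ⇑ε.symm id := by
    rw [← hdiag, Matrix.submatrix_mul_equiv D Q id ε.symm id, Matrix.submatrix_id_id]
  refine ⟨P, Q.submatrix ⇑ε.symm id, d, ?_, ?_, by rw [hA, hDQ, Matrix.mul_assoc]⟩
  · have hPP : P * LinearMap.toMatrix e bM LinearMap.id = 1 := by
      rw [← LinearMap.toMatrix_comp e bM e, LinearMap.comp_id, LinearMap.toMatrix_id]
    have := congrArg Matrix.det hPP
    rw [Matrix.det_mul, Matrix.det_one] at this
    exact IsUnit.of_mul_eq_one _ this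
  · let W := (LinearMap.toMatrix c e (LinearMap.id)).submatrix id ⇑ε.symm
    have hQW : Q.submatrix ⇑ε.symm id * W = 1 := by
      have h2 : Q * LinearMap.toMatrix c e (LinearMap.id) = 1 := by
        rw [← LinearMap.toMatrix_comp c e c, LinearMap.comp_id, LinearMap.toMatrix_id]
      have h3 : Q.submatrix ⇑ε.symm id * W =
          (Q * LinearMap.toMatrix c e (LinearMap.id)).submatrix ⇑ε.symm ⇑ε.symm := by
        rw [← Matrix.submatrix_mul_equiv Q _ ⇑ε.symm (Equiv.refl _) ⇑ε.symm]
        rfl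
      rw [h3, h2, Matrix.submatrix_one_equiv]
    have := congrArg Matrix.det hQW
    rw [Matrix.det_mul, Matrix.det_one] at this
    exact IsUnit.of_mul_eq_one _ this

lemma det_mul_expand {k n : ℕ} (X : Matrix (Fin k) (Fin n) ℤ) (Y : Matrix (Fin n) (Fin k) ℤ) :
    (X * Y).det = ∑ r : Fin k → Fin n, (∏ i, X i (r i)) * (Y.submatrix r id).det := by
  classical
  have h0 : (X * Y).det
      = (Matrix.detRowAlternating : (Fin k → ℤ) [⋀^Fin k]→ₗ[ℤ] ℤ).toMultilinearMap
          (fun i => ∑ l : Fin n, X i l • Y l) := by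
    show (X * Y).det = Matrix.detRowAlternating _
    congr 1
    funext i j
    simp [Matrix.mul_apply, Finset.sum_apply]
  rw [h0, MultilinearMap.map_sum]
  refine Finset.sum_congr rfl fun r _ => ?_
  rw [MultilinearMap.map_smul_univ]
  rfl

lemma det_mul_expand' {k n : ℕ} (X : Matrix (Fin k) (Fin n) ℤ) (Y : Matrix (Fin n) (Fin k) ℤ) :
    (X * Y).det = ∑ r : Fin k → Fin n, (∏ i, Y (r i) i) * (X.submatrix id r).det := by
  rw [← Matrix.det_transpose (X * Y), Matrix.transpose_mul, det_mul_expand]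
  refine Finset.sum_congr rfl fun r _ => ?_
  rw [← Matrix.transpose_submatrix, Matrix.det_transpose]
  rfl

lemma detDiv_dvd_minor {n : ℕ} (A : Matrix (Fin n) (Fin n) ℤ) (k : ℕ)
    (σ τ : Fin k → Fin n) : detDiv A k ∣ (A.submatrix σ τ).det :=
  Finset.gcd_dvd (Finset.mem_univ (σ, τ))

lemma dvd_detDiv {n : ℕ} {A : Matrix (Fin n) (Fin n) ℤ} {k : ℕ} {x : ℤ}
    (h : ∀ σ τ : Fin k → Fin n, x ∣ (A.submatrix σ τ).det) : x ∣ detDiv A k :=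
  Finset.dvd_gcd fun στ _ => h στ.1 στ.2

lemma detDiv_dvd_mul_left {n : ℕ} (U B : Matrix (Fin n) (Fin n) ℤ) (k : ℕ) :
    detDiv B k ∣ detDiv (U * B) k := by
  apply dvd_detDiv
  intro σ τ
  have h1 : (U * B).submatrix σ τ = (U.submatrix σ id) * (B.submatrix id τ) := by
    ext i j; simp [Matrix.mul_apply]
  rw [h1, det_mul_expand]
  refine Finset.dvd_sum fun r _ => Dvd.dvd.mul_left ?_ _
  rw [Matrix.submatrix_submatrix]
  exact detDiv_dvd_minor B k _ _

lemma detDiv_dvd_mul_right {n : ℕ} (B V : Matrix (Fin n) (Fin n) ℤ) (k : ℕ) :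
    detDiv B k ∣ detDiv (B * V) k := by
  apply dvd_detDiv
  intro σ τ
  have h1 : (B * V).submatrix σ τ = (B.submatrix σ id) * (V.submatrix id τ) := by
    ext i j; simp [Matrix.mul_apply]
  rw [h1, det_mul_expand']
  refine Finset.dvd_sum fun r _ => Dvd.dvd.mul_left ?_ _
  rw [Matrix.submatrix_submatrix]
  exact detDiv_dvd_minor B k _ _

lemma detDiv_dvd_of_equiv {n : ℕ} {U B V : Matrix (Fin n) (Fin n) ℤ}
    (hU : IsUnit U.det) (hV : IsUnit V.det) (k : ℕ) :
    detDiv (U * B * V) k ∣ detDiv B k ∧ detDiv B k ∣ detDiv (U * B * V) k := by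
  constructor
  · have h1 : U⁻¹ * (U * B * V) * V⁻¹ = B := by
      rw [show U * B * V = U * (B * V) from by rw [Matrix.mul_assoc],
        ← Matrix.mul_assoc U⁻¹, Matrix.nonsing_inv_mul U hU, Matrix.one_mul,
        Matrix.mul_assoc, Matrix.mul_nonsing_inv V hV, Matrix.mul_one]
    calc detDiv (U * B * V) k ∣ detDiv (U⁻¹ * (U * B * V)) k := detDiv_dvd_mul_left _ _ k
      _ ∣ detDiv (U⁻¹ * (U * B * V) * V⁻¹) k := detDiv_dvd_mul_right _ _ k
      _ = detDiv B k := by rw [h1]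
  · calc detDiv B k ∣ detDiv (U * B) k := detDiv_dvd_mul_left _ _ k
      _ ∣ detDiv (U * B * V) k := detDiv_dvd_mul_right _ _ k

section sorted
variable (p : ℕ) [hp : Fact p.Prime]

/-- zeros last, valuations increasing on nonzero entries -/
def SortedVal {n : ℕ} (d : Fin n → ℤ) : Prop :=
  (∀ i j : Fin n, i ≤ j → d i = 0 → d j = 0) ∧
    (∀ i j : Fin n, i ≤ j → d i ≠ 0 → d j ≠ 0 →
      padicValInt p (d i) ≤ padicValInt p (d j))

/-- number of nonzero entries -/
noncomputable def nzr {n : ℕ} (d : Fin n → ℤ) : ℕ :=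
  (Finset.univ.filter (fun i => d i ≠ 0)).card

/-- partial sums of valuations -/
noncomputable def Sv {n : ℕ} (d : Fin n → ℤ) (k : ℕ) : ℕ :=
  ∑ i : Fin n, if (i : ℕ) < k then padicValInt p (d i) else 0

variable {n : ℕ} {d : Fin n → ℤ}

lemma nzr_le : nzr d ≤ n := by
  classical
  refine le_trans (Finset.card_filter_le _ _) (by simp)

lemma sorted_nonzero_iff (hd : SortedVal p d) (i : Fin n) :
    d i ≠ 0 ↔ (i : ℕ) < nzr d := by
  classical
  constructor
  · intro hi
    have hsub : Finset.Iic i ⊆ Finset.univ.filter (fun j => d j ≠ 0) := by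
      intro j hj
      simp only [Finset.mem_filter, Finset.mem_univ, true_and]
      intro hj0
      exact hi (hd.1 j i (Finset.mem_Iic.mp hj) hj0)
    have := Finset.card_le_card hsub
    rw [Fin.card_Iic] at this
    simpa [nzr] using lt_of_lt_of_le (Nat.lt_succ_self _) this
  · intro hlt
    intro hi0
    have hsub : Finset.univ.filter (fun j => d j ≠ 0) ⊆ Finset.Iio i := by
      intro j hj
      simp only [Finset.mem_filter, Finset.mem_univ, true_and] at hj
      rw [Finset.mem_Iio]
      by_contra hij
      push_neg at hij
      exact hj (hd.1 i j hij hi0)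
    have := Finset.card_le_card hsub
    rw [Fin.card_Iio] at this
    exact absurd (lt_of_lt_of_le hlt this) (lt_irrefl _)

lemma le_of_strictMono {k : ℕ} (g : Fin k → Fin n) (hg : StrictMono g) (i : Fin k) :
    (i : ℕ) ≤ (g i : ℕ) := by
  obtain ⟨iv, hiv⟩ := i
  induction iv with
  | zero => simp
  | succ m ih =>
    have h1 : m < k := lt_trans (Nat.lt_succ_self m) hiv
    have h2 := ih h1
    have h3 : g ⟨m, h1⟩ < g ⟨m + 1, hiv⟩ := hg (by simp [Fin.lt_def])
    rw [Fin.lt_def] at h3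
    simpa using lt_of_le_of_lt h2 h3

lemma sum_filter_lt {k : ℕ} (hk : k ≤ n) (f : Fin n → ℕ) :
    (∑ i : Fin n, if (i : ℕ) < k then f i else 0) = ∑ i : Fin k, f (Fin.castLE hk i) := by
  classical
  set F : ℕ → ℕ := fun m => if h : m < n then (if m < k then f ⟨m, h⟩ else 0) else 0 with hF
  have h1 : (∑ i : Fin n, if (i : ℕ) < k then f i else 0) = ∑ i : Fin n, F i := by
    refine Finset.sum_congr rfl fun i _ => ?_
    simp [hF, i.2]
  have h2 : ∑ i : Fin n, F (i : ℕ) = ∑ m ∈ Finset.range n, F m :=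
    Fin.sum_univ_eq_sum_range F n
  have h3 : ∑ m ∈ Finset.range n, F m = ∑ m ∈ Finset.range k, F m := by
    refine (Finset.sum_subset (by intro x hx; simp only [Finset.mem_range] at *; omega)
      fun x hx hnx => ?_).symm
    simp only [Finset.mem_range] at hx hnx
    simp [hF, hnx]
  have h4 : ∑ m ∈ Finset.range k, F m = ∑ i : Fin k, F (i : ℕ) :=
    (Fin.sum_univ_eq_sum_range F k).symm
  have h5 : ∀ i : Fin k, F (i : ℕ) = f (Fin.castLE hk i) := by
    intro i
    have h6 : (i : ℕ) < n := lt_of_lt_of_le i.2 hk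
    simp [hF, h6, i.2]
    rfl
  rw [h1, h2, h3, h4]
  exact Finset.sum_congr rfl fun i _ => h5 i

lemma Sv_succ {k : ℕ} (hk : k < n) :
    Sv p d (k + 1) = Sv p d k + padicValInt p (d ⟨k, hk⟩) := by
  classical
  have h1 : ∀ i : Fin n, (if (i : ℕ) < k + 1 then padicValInt p (d i) else 0)
      = (if (i : ℕ) < k then padicValInt p (d i) else 0)
        + (if i = ⟨k, hk⟩ then padicValInt p (d i) else 0) := by
    intro i
    rcases lt_trichotomy (i : ℕ) k with h | h | h
    · rw [if_pos (by omega), if_pos h, if_neg (fun hh => by subst hh; simp at h)]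
      simp
    · rw [if_pos (by omega), if_neg (by omega), if_pos (by exact Fin.ext h)]
      simp
    · rw [if_neg (by omega), if_neg (by omega), if_neg (fun hh => by subst hh; simp at h)]
  rw [Sv, Sv]
  simp only [h1]
  rw [Finset.sum_add_distrib, Finset.sum_ite_eq' Finset.univ (⟨k, hk⟩ : Fin n)]
  simp

lemma padicValInt_prod {ι : Type*} (s : Finset ι) (f : ι → ℤ) (hf : ∀ i ∈ s, f i ≠ 0) :
    padicValInt p (∏ i ∈ s, f i) = ∑ i ∈ s, padicValInt p (f i) := by
  classical
  induction s using Finset.cons_induction with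
  | empty => simp [padicValInt]
  | cons a s ha ih =>
    have hprod : ∏ i ∈ s, f i ≠ 0 :=
      Finset.prod_ne_zero_iff.mpr fun i hi => hf i (Finset.mem_cons_of_mem hi)
    rw [Finset.prod_cons, Finset.sum_cons,
      padicValInt.mul (hf a (Finset.mem_cons_self a s)) hprod,
      ih fun i hi => hf i (Finset.mem_cons_of_mem hi)]

lemma sorted_sum_le (hd : SortedVal p d) {k : ℕ} (σ : Fin k → Fin n)
    (hσ : Function.Injective σ) (h0 : ∀ i, d (σ i) ≠ 0) :
    Sv p d k ≤ ∑ i : Fin k, padicValInt p (d (σ i)) := by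
  classical
  have hk : k ≤ n := by
    have := Fintype.card_le_of_injective σ hσ
    simpa using this
  set S : Finset (Fin n) := Finset.univ.image σ with hS
  have hcardS : S.card = k := by
    rw [hS, Finset.card_image_of_injective _ hσ]; simp
  set g : Fin k → Fin n := fun i => S.orderEmbOfFin hcardS i with hg
  have hgmono : StrictMono g := (S.orderEmbOfFin hcardS).strictMono
  have hgmem : ∀ i, g i ∈ S := fun i => Finset.orderEmbOfFin_mem S hcardS i
  have hgne : ∀ i, d (g i) ≠ 0 := by
    intro i
    have := hgmem i
    rw [hS, Finset.mem_image] at this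
    obtain ⟨j, _, hj⟩ := this
    rw [← hj]; exact h0 j
  have hsum1 : ∑ j ∈ S, padicValInt p (d j) = ∑ i : Fin k, padicValInt p (d (σ i)) := by
    rw [hS, Finset.sum_image (fun x _ y _ h => hσ h)]
  have himg : Finset.univ.image g = S := by
    refine Finset.eq_of_subset_of_card_le (fun x hx => ?_) ?_
    · rw [Finset.mem_image] at hx; obtain ⟨i, _, hi⟩ := hx; rw [← hi]; exact hgmem i
    · rw [Finset.card_image_of_injective _ hgmono.injective, hcardS]; simp
  have hsum2 : ∑ j ∈ S, padicValInt p (d j) = ∑ i : Fin k, padicValInt p (d (g i)) := by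
    rw [← himg, Finset.sum_image (fun x _ y _ h => hgmono.injective h)]
  rw [Sv, sum_filter_lt hk, ← hsum1, hsum2]
  refine Finset.sum_le_sum fun i _ => ?_
  have hle : Fin.castLE hk i ≤ g i := by
    rw [Fin.le_def]
    simpa using le_of_strictMono g hgmono i
  have hne1 : d (Fin.castLE hk i) ≠ 0 := by
    intro h00
    exact hgne i (hd.1 _ _ hle h00)
  exact hd.2 _ _ hle hne1 (hgne i)

lemma det_submatrix_zero_of_not_inj (M : Matrix (Fin n) (Fin n) ℤ) {k : ℕ}
    (σ τ : Fin k → Fin n) (hσ : ¬ Function.Injective σ) : (M.submatrix σ τ).det = 0 := by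
  unfold Function.Injective at hσ
  push_neg at hσ
  obtain ⟨i, j, h1, h2⟩ := hσ
  refine Matrix.det_zero_of_row_eq h2 ?_
  funext l
  simp [Matrix.submatrix_apply, h1]

lemma diag_minor_dvd {k : ℕ} {x : ℤ}
    (h : ∀ σ : Fin k → Fin n, Function.Injective σ → x ∣ ∏ i, d (σ i)) :
    x ∣ detDiv (Matrix.diagonal d) k := by
  classical
  apply dvd_detDiv
  intro σ τ
  by_cases hσ : Function.Injective σ
  · rw [Matrix.det_apply]
    refine Finset.dvd_sum fun π _ => ?_
    rw [Units.smul_def]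
    refine Dvd.dvd.mul_left ?_ _
    by_cases hall : ∀ i, σ (π i) = τ i
    · have hterm : ∀ i : Fin k, (Matrix.diagonal d).submatrix σ τ (π i) i = d (σ (π i)) := by
        intro i
        rw [Matrix.submatrix_apply, ← hall i, Matrix.diagonal_apply_eq]
      calc x ∣ ∏ i, d (σ i) := h σ hσ
        _ = ∏ i, d (σ (π i)) := (Equiv.prod_comp π (fun j => d (σ j))).symm
        _ = ∏ i, (Matrix.diagonal d).submatrix σ τ (π i) i := by
            exact Finset.prod_congr rfl fun i _ => (hterm i).symm
    · push_neg at hall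
      obtain ⟨i, hi⟩ := hall
      have : (Matrix.diagonal d).submatrix σ τ (π i) i = 0 := by
        rw [Matrix.submatrix_apply, Matrix.diagonal_apply_ne _ hi]
      have h0 : ∏ j : Fin k, (Matrix.diagonal d).submatrix σ τ (π j) j = 0 :=
        Finset.prod_eq_zero (Finset.mem_univ i) this
      rw [h0]
      exact dvd_zero x
  · rw [det_submatrix_zero_of_not_inj (Matrix.diagonal d) σ τ hσ]
    exact dvd_zero x

lemma detDiv_diag_dvd_prod {k : ℕ} (σ : Fin k → Fin n) (hσ : Function.Injective σ) :
    detDiv (Matrix.diagonal d) k ∣ ∏ i, d (σ i) := by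
  have h := detDiv_dvd_minor (Matrix.diagonal d) k σ σ
  rwa [Matrix.submatrix_diagonal d σ hσ, Matrix.det_diagonal] at h

lemma detDiv_diag_ne_zero (hd : SortedVal p d) {k : ℕ} (hk : k ≤ nzr d) :
    detDiv (Matrix.diagonal d) k ≠ 0 := by
  have hkn : k ≤ n := le_trans hk nzr_le
  have h1 := detDiv_diag_dvd_prod (d := d) (Fin.castLE hkn) (Fin.castLE_injective hkn)
  have h2 : ∏ i : Fin k, d (Fin.castLE hkn i) ≠ 0 :=
    Finset.prod_ne_zero_iff.mpr fun i _ => (sorted_nonzero_iff p hd _).mpr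
      (by simpa using lt_of_lt_of_le i.2 hk)
  intro h0
  rw [h0] at h1
  exact h2 (zero_dvd_iff.mp h1)

lemma detDiv_diag_eq_zero {k : ℕ} (hk : nzr d < k) :
    detDiv (Matrix.diagonal d) k = 0 := by
  classical
  rw [detDiv, Finset.gcd_eq_zero_iff]
  rintro ⟨σ, τ⟩ -
  by_cases hσ : Function.Injective σ
  · rw [Matrix.det_apply]
    refine Finset.sum_eq_zero fun π _ => ?_
    have hex : ∃ i, d (σ (π i)) = 0 := by
      by_contra hno
      push_neg at hno
      have hsub : Finset.univ.image (σ ∘ π) ⊆ Finset.univ.filter (fun i => d i ≠ 0) := by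
        intro x hx
        rw [Finset.mem_image] at hx
        obtain ⟨i, _, hi⟩ := hx
        simp only [Finset.mem_filter, Finset.mem_univ, true_and]
        rw [← hi]; exact hno i
      have hcard := Finset.card_le_card hsub
      rw [Finset.card_image_of_injective _ (hσ.comp π.injective)] at hcard
      simp only [Finset.card_univ, Fintype.card_fin] at hcard
      exact absurd (lt_of_lt_of_le hk hcard) (lt_irrefl _)
    obtain ⟨i, hi⟩ := hex
    have hfac : (Matrix.diagonal d).submatrix σ τ (π i) i = 0 := by
      rcases eq_or_ne (σ (π i)) (τ i) with h | h
      · rw [Matrix.submatrix_apply, ← h, Matrix.diagonal_apply_eq, hi]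
      · rw [Matrix.submatrix_apply, Matrix.diagonal_apply_ne _ h]
    have h0 : ∏ j : Fin k, (Matrix.diagonal d).submatrix σ τ (π j) j = 0 :=
      Finset.prod_eq_zero (Finset.mem_univ i) hfac
    rw [h0, smul_zero]
  · exact det_submatrix_zero_of_not_inj (Matrix.diagonal d) σ τ hσ

lemma detDiv_diag_val (hd : SortedVal p d) {k : ℕ} (hk : k ≤ nzr d) :
    padicValInt p (detDiv (Matrix.diagonal d) k) = Sv p d k := by
  have hkn : k ≤ n := le_trans hk nzr_le
  have hne := detDiv_diag_ne_zero p hd hk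
  -- upper bound
  have hub : padicValInt p (detDiv (Matrix.diagonal d) k) ≤ Sv p d k := by
    have h1 := detDiv_diag_dvd_prod (d := d) (Fin.castLE hkn) (Fin.castLE_injective hkn)
    have hnz : ∀ i : Fin k, d (Fin.castLE hkn i) ≠ 0 := fun i =>
      (sorted_nonzero_iff p hd _).mpr (by simpa using lt_of_lt_of_le i.2 hk)
    have h2 : ∏ i : Fin k, d (Fin.castLE hkn i) ≠ 0 :=
      Finset.prod_ne_zero_iff.mpr fun i _ => hnz i
    have h3 : (p : ℤ) ^ (padicValInt p (detDiv (Matrix.diagonal d) k))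
        ∣ ∏ i : Fin k, d (Fin.castLE hkn i) := dvd_trans (padicValInt_dvd _) h1
    rw [padicValInt_dvd_iff] at h3
    rcases h3 with h3 | h3
    · exact absurd h3 h2
    · rw [padicValInt_prod p Finset.univ _ (fun i _ => hnz i)] at h3
      rwa [Sv, sum_filter_lt hkn]
  -- lower bound
  have hlb : Sv p d k ≤ padicValInt p (detDiv (Matrix.diagonal d) k) := by
    have h4 : (p : ℤ) ^ (Sv p d k) ∣ detDiv (Matrix.diagonal d) k := by
      refine diag_minor_dvd fun σ hσ => ?_
      by_cases h0 : ∀ i, d (σ i) ≠ 0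
      · have h5 : ∀ i : Fin k, (p : ℤ) ^ (padicValInt p (d (σ i))) ∣ d (σ i) :=
          fun i => padicValInt_dvd _
        have h6 : (∏ i : Fin k, (p : ℤ) ^ (padicValInt p (d (σ i)))) ∣ ∏ i, d (σ i) :=
          Finset.prod_dvd_prod_of_dvd _ _ fun i _ => h5 i
        rw [Finset.prod_pow_eq_pow_sum] at h6
        exact dvd_trans (pow_dvd_pow _ (sorted_sum_le p hd σ hσ h0)) h6
      · push_neg at h0
        obtain ⟨i, hi⟩ := h0
        rw [Finset.prod_eq_zero (Finset.mem_univ i) hi]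
        exact dvd_zero _
    rw [padicValInt_dvd_iff] at h4
    rcases h4 with h4 | h4
    · exact absurd h4 hne
    · exact h4
  omega

end sorted


section compare
variable (p : ℕ) [hp : Fact p.Prime] {n : ℕ} {d : Fin n → ℤ}

lemma val_dvd_le {a b : ℤ} (hb : b ≠ 0) (h : a ∣ b) :
    padicValInt p a ≤ padicValInt p b := by
  have h1 := dvd_trans (padicValInt_dvd (p := p) a) h
  rw [padicValInt_dvd_iff] at h1
  rcases h1 with h1 | h1
  · exact absurd h1 hb
  · exact h1

lemma diag_compare (hd : SortedVal p d) (s : Fin n → ℤ)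
    (hchain : ∀ i j : Fin n, i ≤ j → s i ∣ s j)
    {U V : Matrix (Fin n) (Fin n) ℤ} (hU : IsUnit U.det) (hV : IsUnit V.det)
    (heq : Matrix.diagonal d = U * Matrix.diagonal s * V) :
    Multiset.map (fun i => (padicValInt p (d i) : ℚ))
        (Multiset.filter (fun i => d i ≠ 0) Finset.univ.val)
      = Multiset.map (fun i => (padicValInt p (s i) : ℚ))
        (Multiset.filter (fun i => s i ≠ 0) Finset.univ.val) := by
  classical
  have hs : SortedVal p s := by
    constructor
    · intro i j hij h0
      exact zero_dvd_iff.mp (h0 ▸ hchain i j hij)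
    · intro i j hij hi hj
      exact val_dvd_le p hj (hchain i j hij)
  have hdvd : ∀ k, detDiv (Matrix.diagonal d) k ∣ detDiv (Matrix.diagonal s) k ∧
      detDiv (Matrix.diagonal s) k ∣ detDiv (Matrix.diagonal d) k := by
    intro k
    have h := detDiv_dvd_of_equiv (B := Matrix.diagonal s) hU hV k
    rw [← heq] at h
    exact h
  have hr : nzr d = nzr s := by
    by_contra hne
    rcases Nat.lt_or_ge (nzr d) (nzr s) with h | h
    · have h1 := detDiv_diag_eq_zero (d := d) (k := nzr s) h
      have h2 := detDiv_diag_ne_zero p hs (le_refl (nzr s))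
      exact h2 (zero_dvd_iff.mp (h1 ▸ (hdvd (nzr s)).1))
    · rcases Nat.lt_or_ge (nzr s) (nzr d) with h' | h'
      · have h1 := detDiv_diag_eq_zero (d := s) (k := nzr d) h'
        have h2 := detDiv_diag_ne_zero p hd (le_refl (nzr d))
        exact h2 (zero_dvd_iff.mp (h1 ▸ (hdvd (nzr d)).2))
      · omega
  have hSv : ∀ k, k ≤ nzr d → Sv p d k = Sv p s k := by
    intro k hk
    have h1 := detDiv_diag_val p hd hk
    have h2 := detDiv_diag_val p hs (hr ▸ hk)
    have h3 : padicValInt p (detDiv (Matrix.diagonal d) k)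
        = padicValInt p (detDiv (Matrix.diagonal s) k) :=
      le_antisymm (val_dvd_le p (detDiv_diag_ne_zero p hs (hr ▸ hk)) (hdvd k).1)
        (val_dvd_le p (detDiv_diag_ne_zero p hd hk) (hdvd k).2)
    rw [← h1, ← h2, h3]
  have hpt : ∀ i : Fin n, (i : ℕ) < nzr d →
      padicValInt p (d i) = padicValInt p (s i) := by
    intro i hi
    have hin : (i : ℕ) < n := i.2
    have h1 := Sv_succ p (d := d) hin
    have h2 := Sv_succ p (d := s) hin
    have h3 := hSv (i : ℕ) (le_of_lt hi)
    have h4 := hSv ((i : ℕ) + 1) hi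
    have h5 : (⟨(i : ℕ), hin⟩ : Fin n) = i := by ext; rfl
    rw [h5] at h1 h2
    omega
  have hfeq : Multiset.filter (fun i => d i ≠ 0) Finset.univ.val
      = Multiset.filter (fun i => s i ≠ 0) Finset.univ.val := by
    refine Multiset.filter_congr fun i _ => ?_
    rw [sorted_nonzero_iff p hd i, sorted_nonzero_iff p hs i, hr]
  refine Multiset.map_congr hfeq fun i hi => ?_
  rw [Multiset.mem_filter] at hi
  have : (i : ℕ) < nzr d := by
    rw [hr, ← sorted_nonzero_iff p hs i]; exact hi.2
  exact_mod_cast congrArg (fun m : ℕ => (m : ℚ)) (hpt i this)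

end compare

lemma charpoly_diagonal {n : ℕ} (d : Fin n → ℤ) :
    (Matrix.diagonal d).charpoly = ∏ i, (X - C (d i)) := by
  classical
  unfold Matrix.charpoly
  have h : (Matrix.diagonal d).charmatrix
      = Matrix.diagonal (fun i => (X : ℤ[X]) - C (d i)) := by
    ext i j
    by_cases hij : i = j
    · subst hij
      rw [Matrix.charmatrix_apply_eq, Matrix.diagonal_apply_eq, Matrix.diagonal_apply_eq]
    · rw [Matrix.charmatrix_apply_ne _ _ _ hij, Matrix.diagonal_apply_ne _ hij,
        Matrix.diagonal_apply_ne _ hij]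
      simp
  rw [h, Matrix.det_diagonal]

lemma roots_charpoly_diagonal {n : ℕ} (d : Fin n → ℤ) (K : Type) [Field K] [CharZero K] :
    ((Matrix.diagonal d).charpoly.map (Int.castRingHom K)).roots
      = Finset.univ.val.map (fun i => ((d i : K))) := by
  classical
  rw [charpoly_diagonal, Polynomial.map_prod]
  have h1 : ∀ i : Fin n, ((X : ℤ[X]) - C (d i)).map (Int.castRingHom K)
      = X - C ((d i : K)) := by
    intro i
    rw [Polynomial.map_sub, Polynomial.map_X, Polynomial.map_C]
    rfl
  simp only [h1]
  rw [Finset.prod_eq_multiset_prod]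
  have h2 : Multiset.map (fun i => (X : K[X]) - C ((d i : K))) Finset.univ.val
      = Multiset.map (fun a => (X : K[X]) - C a)
          (Multiset.map (fun i => ((d i : K))) Finset.univ.val) := by
    rw [Multiset.map_map]
    rfl
  rw [h2, Polynomial.roots_multiset_prod_X_sub_C]

lemma padicEigVal_intCast (p : ℕ) [Fact p.Prime] {K : Type} [Field K]
    [Algebra ℚ_[p] K] (m : ℤ) (hm : m ≠ 0) :
    padicEigVal p ((m : K)) = (padicValInt p m : ℚ) := by
  have h1 : ((m : K)) = algebraMap ℚ_[p] K ((m : ℚ_[p])) := (map_intCast _ m).symm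
  rw [h1, padicEigVal, minpoly.eq_X_sub_C K ((m : ℚ_[p]))]
  have h2 : ((X : ℚ_[p][X]) - C ((m : ℚ_[p]))).coeff 0 = -((m : ℚ_[p])) := by simp
  have h3 : ((X : ℚ_[p][X]) - C ((m : ℚ_[p]))).natDegree = 1 := Polynomial.natDegree_X_sub_C _
  rw [h2, h3]
  have h4 : (-((m : ℚ_[p]))) = (((-m : ℤ) : ℚ_[p])) := by push_cast; ring
  rw [h4, Padic.valuation_intCast]
  have h5 : padicValInt p (-m) = padicValInt p m := by
    unfold padicValInt
    rw [Int.natAbs_neg]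
  rw [h5]
  push_cast
  ring

lemma exists_sorted_perm (p : ℕ) [Fact p.Prime] {n : ℕ} (d : Fin n → ℤ) :
    ∃ π : Equiv.Perm (Fin n), SortedVal p (d ∘ π) := by
  classical
  let key : Fin n → ℕ∞ := fun i => if d i = 0 then ⊤ else (padicValInt p (d i) : ℕ∞)
  have hkeyval : ∀ x, key x = if d x = 0 then ⊤ else (padicValInt p (d x) : ℕ∞) :=
    fun x => rfl
  refine ⟨Tuple.sort key, ?_, ?_⟩
  · intro i j hij h0
    have hm := Tuple.monotone_sort key hij
    simp only [Function.comp_apply] at hm h0 ⊢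
    rw [hkeyval, hkeyval, if_pos h0, top_le_iff] at hm
    by_contra h2
    rw [if_neg h2] at hm
    exact WithTop.coe_ne_top hm
  · intro i j hij hi hj
    have hm := Tuple.monotone_sort key hij
    simp only [Function.comp_apply] at hm hi hj ⊢
    rw [hkeyval, hkeyval, if_neg hi, if_neg hj] at hm
    exact_mod_cast hm

theorem pCorrespondent_diagonal {n : ℕ} (p : ℕ) [Fact p.Prime] {d : Fin n → ℤ}
    (hd : SortedVal p d) : PCorrespondent p (Matrix.diagonal d) := by
  classical
  intro s hs K _Kf _Kalg _Kfd _hcard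
  obtain ⟨⟨U, V, hU, hV, heq⟩, hchain⟩ := hs
  haveI : CharZero K := charZero_of_injective_algebraMap (algebraMap ℚ_[p] K).injective
  rw [roots_charpoly_diagonal d K]
  rw [Multiset.filter_map, Multiset.filter_map, Multiset.map_map, Multiset.map_map]
  have hfd : Multiset.filter ((fun x : K => x ≠ 0) ∘ (fun i => ((d i : K))))
      Finset.univ.val = Multiset.filter (fun i => d i ≠ 0) Finset.univ.val := by
    refine Multiset.filter_congr fun i _ => ?_
    simp [Function.comp, Int.cast_ne_zero]
  have hfs : Multiset.filter ((fun x : ℤ => x ≠ 0) ∘ s) Finset.univ.val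
      = Multiset.filter (fun i => s i ≠ 0) Finset.univ.val := by
    refine Multiset.filter_congr fun i _ => ?_
    simp [Function.comp]
  rw [hfd, hfs]
  have hmapd : Multiset.map (padicEigVal p ∘ (fun i => ((d i : K))))
      (Multiset.filter (fun i => d i ≠ 0) Finset.univ.val)
      = Multiset.map (fun i => (padicValInt p (d i) : ℚ))
        (Multiset.filter (fun i => d i ≠ 0) Finset.univ.val) := by
    refine Multiset.map_congr rfl fun i hi => ?_
    rw [Multiset.mem_filter] at hi
    exact padicEigVal_intCast p (d i) hi.2
  rw [hmapd]
  exact diag_compare p hd s hchain hU hV heq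

theorem exists_unimodular_pCorrespondent (n : ℕ) (hn : 0 < n) (p : ℕ) [Fact p.Prime]
    (A : Matrix (Fin n) (Fin n) ℤ) :
    ∃ P Q : Matrix (Fin n) (Fin n) ℤ, IsUnit P.det ∧ IsUnit Q.det ∧
      PCorrespondent p (P * A * Q) := by
  classical
  obtain ⟨P, Q, d, hP, hQ, hA⟩ := exists_eq_mul_diagonal_mul n A
  obtain ⟨π, hπ⟩ := exists_sorted_perm p d
  set E1 : Matrix (Fin n) (Fin n) ℤ := (1 : Matrix (Fin n) (Fin n) ℤ).submatrix ⇑π id with hE1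
  set E2 : Matrix (Fin n) (Fin n) ℤ := (1 : Matrix (Fin n) (Fin n) ℤ).submatrix id ⇑π with hE2
  have hE12 : E1 * E2 = 1 := by
    have h := Matrix.submatrix_mul_equiv (1 : Matrix (Fin n) (Fin n) ℤ)
      (1 : Matrix (Fin n) (Fin n) ℤ) ⇑π (Equiv.refl (Fin n)) ⇑π
    simp only [Equiv.coe_refl] at h
    rw [hE1, hE2, h, Matrix.one_mul, Matrix.submatrix_one_equiv]
  have hE21 : E2 * E1 = 1 := by
    have h := Matrix.submatrix_mul_equiv (1 : Matrix (Fin n) (Fin n) ℤ)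
      (1 : Matrix (Fin n) (Fin n) ℤ) id π id
    rw [hE1, hE2, h, Matrix.one_mul, Matrix.submatrix_id_id]
  have hdetE1 : IsUnit E1.det := by
    have := congrArg Matrix.det hE12
    rw [Matrix.det_mul, Matrix.det_one] at this
    exact IsUnit.of_mul_eq_one _ this
  have hdetE2 : IsUnit E2.det := by
    have := congrArg Matrix.det hE21
    rw [Matrix.det_mul, Matrix.det_one] at this
    exact IsUnit.of_mul_eq_one _ this
  have hPinv : IsUnit (P⁻¹).det := by
    have h1 : P⁻¹ * P = 1 := Matrix.nonsing_inv_mul P hP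
    have := congrArg Matrix.det h1
    rw [Matrix.det_mul, Matrix.det_one] at this
    exact IsUnit.of_mul_eq_one _ this
  have hQinv : IsUnit (Q⁻¹).det := by
    have h1 : Q * Q⁻¹ = 1 := Matrix.mul_nonsing_inv Q hQ
    have := congrArg Matrix.det h1
    rw [Matrix.det_mul, Matrix.det_one] at this
    exact IsUnit.of_mul_eq_one _ (by rw [mul_comm] at this; exact this)
  have hPAQ : P⁻¹ * A * Q⁻¹ = Matrix.diagonal d := by
    rw [hA, show P * Matrix.diagonal d * Q = P * (Matrix.diagonal d * Q) from by
      rw [Matrix.mul_assoc], ← Matrix.mul_assoc P⁻¹, Matrix.nonsing_inv_mul P hP,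
      Matrix.one_mul, Matrix.mul_assoc, Matrix.mul_nonsing_inv Q hQ, Matrix.mul_one]
  have hperm : E1 * Matrix.diagonal d * E2 = Matrix.diagonal (d ∘ ⇑π) := by
    have h1 : E1 * Matrix.diagonal d = (Matrix.diagonal d).submatrix ⇑π id := by
      have h := Matrix.submatrix_mul_equiv (1 : Matrix (Fin n) (Fin n) ℤ)
        (Matrix.diagonal d) ⇑π (Equiv.refl (Fin n)) id
      simp only [Equiv.coe_refl, Matrix.submatrix_id_id] at h
      rw [hE1, h, Matrix.one_mul]
    have h2 : (Matrix.diagonal d).submatrix ⇑π id * E2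
        = (Matrix.diagonal d).submatrix ⇑π ⇑π := by
      have h := Matrix.submatrix_mul_equiv (Matrix.diagonal d)
        (1 : Matrix (Fin n) (Fin n) ℤ) ⇑π (Equiv.refl (Fin n)) ⇑π
      simp only [Equiv.coe_refl, Matrix.submatrix_id_id] at h
      rw [hE2, h, Matrix.mul_one]
    rw [h1, h2, Matrix.submatrix_diagonal_equiv]
  have hd1 : IsUnit (E1 * P⁻¹).det := by rw [Matrix.det_mul]; exact hdetE1.mul hPinv
  have hd2 : IsUnit (Q⁻¹ * E2).det := by rw [Matrix.det_mul]; exact hQinv.mul hdetE2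
  refine ⟨E1 * P⁻¹, Q⁻¹ * E2, hd1, hd2, ?_⟩
  have hfinal : E1 * P⁻¹ * A * (Q⁻¹ * E2) = Matrix.diagonal (d ∘ ⇑π) := by
    calc E1 * P⁻¹ * A * (Q⁻¹ * E2) = E1 * (P⁻¹ * A * Q⁻¹) * E2 := by
          rw [Matrix.mul_assoc E1 P⁻¹ A, ← Matrix.mul_assoc _ Q⁻¹ E2,
            Matrix.mul_assoc E1 _ Q⁻¹]
      _ = E1 * Matrix.diagonal d * E2 := by rw [hPAQ]
      _ = Matrix.diagonal (d ∘ ⇑π) := hperm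
  rw [hfinal]
  exact pCorrespondent_diagonal p hπ
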